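/- Let G be a finite simple graph and k ≥ 1 an integer. Suppose a nonempty subset U of vertices maximizes the k-clique density c_k(G[W]) / |W| over all nonempty subsets W of vertices (i.e., G[U] is a k-clique densest subgraph of G). Then every vertex v ∈ U is contained in at least c_k(G[U]) / |U| many k-cliques of G[U]. -/

import Mathlib

open Classical Finset

/-- `cliquesIn G k W` is the number of `k`-cliques of the induced subgraph `G[W]`, i.e. the
number of `k`-cliques of `G` all of whose vertices lie in `W`. -/
noncomputable def cliquesIn {V : Type*} [Fintype V] [DecidableEq V] (G : SimpleGraph V)
    [DecidableRel G.Adj] (k : ℕ) (W : Finset V) : ℕ :=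
  ((G.cliqueFinset k).filter fun s => s ⊆ W).card

/-- `kCliqueDeg G k W v` is the number of `k`-cliques of the induced subgraph `G[W]`
that contain the vertex `v`. -/
noncomputable def kCliqueDeg {V : Type*} [Fintype V] [DecidableEq V] (G : SimpleGraph V)
    [DecidableRel G.Adj] (k : ℕ) (W : Finset V) (v : V) : ℕ :=
  ((G.cliqueFinset k).filter fun s => s ⊆ W ∧ v ∈ s).card

/-- If a nonempty vertex set `U` maximizes the `k`-clique density `c_k(G[W])/|W|` over all
nonempty vertex sets `W` (i.e. `G[U]` is a `k`-clique densest subgraph), then every vertex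
`v ∈ U` is contained in at least `c_k(G[U])/|U|` many `k`-cliques of `G[U]`. -/
theorem densest_subgraph_min_clique_degree {V : Type*} [Fintype V] [DecidableEq V]
    (G : SimpleGraph V) [DecidableRel G.Adj] (k : ℕ) (hk : 1 ≤ k)
    (U : Finset V) (hU : U.Nonempty)
    (hmax : ∀ W : Finset V, W.Nonempty →
      (cliquesIn G k W : ℝ) / (W.card : ℝ) ≤ (cliquesIn G k U : ℝ) / (U.card : ℝ)) :
    ∀ v ∈ U, (cliquesIn G k U : ℝ) / (U.card : ℝ) ≤ (kCliqueDeg G k U v : ℝ) := by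
  intro v hv
  have hn : (0:ℝ) < (U.card : ℝ) := by exact_mod_cast hU.card_pos
  set d : ℝ := (cliquesIn G k U : ℝ) / (U.card : ℝ) with hd
  have hd0 : 0 ≤ d := div_nonneg (by positivity) hn.le
  -- split cliques of U according to whether they contain v
  have hsplit : cliquesIn G k U = kCliqueDeg G k U v + cliquesIn G k (U.erase v) := by
    unfold cliquesIn kCliqueDeg
    have h1 := Finset.card_filter_add_card_filter_not
      (s := (G.cliqueFinset k).filter (fun s => s ⊆ U)) (p := fun s => v ∈ s)
    rw [Finset.filter_filter, Finset.filter_filter] at h1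
    have h2 : ((G.cliqueFinset k).filter fun s => s ⊆ U ∧ ¬ v ∈ s)
        = (G.cliqueFinset k).filter fun s => s ⊆ U.erase v := by
      apply Finset.filter_congr
      intro s _
      simp [Finset.subset_erase]
    rw [h2] at h1
    omega
  have hcardU : 1 ≤ U.card := hU.card_pos
  have hcarde : (U.erase v).card = U.card - 1 := Finset.card_erase_of_mem hv
  -- key bound: cliquesIn (U.erase v) ≤ d * (U.card - 1)
  have hkey : (cliquesIn G k (U.erase v) : ℝ) ≤ d * ((U.card : ℝ) - 1) := by
    rcases (U.erase v).eq_empty_or_nonempty with he | he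
    · have hU1 : U.card = 1 := by
        have := Finset.card_eq_zero.mpr he
        omega
      have hz : cliquesIn G k (U.erase v) = 0 := by
        unfold cliquesIn
        rw [Finset.card_eq_zero, Finset.filter_eq_empty_iff]
        intro s hs hsub
        rw [he, Finset.subset_empty] at hsub
        have : s.card = k := (SimpleGraph.mem_cliqueFinset_iff.mp hs).card_eq
        simp [hsub] at this
        omega
      rw [hz, hU1]
      simp
    · have := hmax (U.erase v) he
      rw [div_le_iff₀ (by exact_mod_cast he.card_pos)] at this
      calc (cliquesIn G k (U.erase v) : ℝ) ≤ d * ((U.erase v).card : ℝ) := this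
        _ = d * ((U.card : ℝ) - 1) := by
            congr 1
            rw [hcarde]
            push_cast [hcardU]
            ring
  -- conclude
  have heq : (cliquesIn G k U : ℝ) = d * (U.card : ℝ) := by
    rw [hd, div_mul_cancel₀ _ hn.ne']
  have : (kCliqueDeg G k U v : ℝ) = (cliquesIn G k U : ℝ) - (cliquesIn G k (U.erase v) : ℝ) := by
    rw [hsplit]; push_cast; ring
  rw [this, heq]
  nlinarith [hkey]
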